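/- Let K/ℚ_p be a finite extension with ring of integers A, uniformizer π, and ramification degree e, and suppose e/(p−1) is not a power of p. Let n be a positive integer and let I_n be the ideal of A generated by all a^n − 1 for a ∈ A with a ≡ 1 mod π. Then A/I_n ≅ A/π^i, where i = e·(ν_p(n) − ⌈log_p(e/(p−1))⌉) + p^{⌈log_p(e/(p−1))⌉} if ⌈log_p(e/(p−1))⌉ ≤ ν_p(n), and i = p^{ν_p(n)} otherwise. -/

import Mathlib

open Finset in
/-- Binomial expansion with the linear term extracted. -/
lemma binom_lin {A : Type} [CommRing A] (x : A) (n : ℕ) (hn : 1 ≤ n) :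
    ∃ t : A, (1 + x) ^ n - 1 = n * x + x ^ 2 * t := by
  induction n with
  | zero => omega
  | succ m ih =>
    rcases Nat.eq_or_lt_of_le hn with h1 | h1
    · exact ⟨0, by simp [← h1]⟩
    · obtain ⟨t, ht⟩ := ih (by omega)
      refine ⟨t * (1 + x) + m, ?_⟩
      have h : (1 + x) ^ (m + 1) - 1 = ((1 + x) ^ m - 1) * (1 + x) + x := by ring
      rw [h, ht]
      push_cast
      ring

open Finset in
/-- Binomial expansion of the `p`-th power with linear and top terms extracted. -/
lemma binom_p {A : Type} [CommRing A] (x : A) (p : ℕ) (hp : p.Prime) :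
    ∃ t : A, (1 + x) ^ p - 1 = p * x + x ^ p + p * (x ^ 2 * t) := by
  have h2 : 2 ≤ p := hp.two_le
  have hpow : (1 + x) ^ p = ∑ k ∈ range (p + 1), x ^ k * (p.choose k : A) := by
    rw [add_comm, add_pow]
    simp
  have hsplit : ∑ k ∈ range (p + 1), x ^ k * (p.choose k : A)
      = (1 + (p : A) * x + x ^ p) + ∑ k ∈ Ico 2 p, x ^ k * (p.choose k : A) := by
    rw [Finset.sum_range_succ, Finset.range_eq_Ico,
      Finset.sum_eq_sum_Ico_succ_bot (by omega) (fun k => x ^ k * (p.choose k : A)),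
      Finset.sum_eq_sum_Ico_succ_bot (by omega) (fun k => x ^ k * (p.choose k : A))]
    simp
    ring
  have hdvd : (p : A) * x ^ 2 ∣ ∑ k ∈ Ico 2 p, x ^ k * (p.choose k : A) := by
    refine Finset.dvd_sum fun k hk => ?_
    rw [Finset.mem_Ico] at hk
    obtain ⟨b, hb⟩ := hp.dvd_choose_self (by omega) hk.2
    obtain ⟨y, hy⟩ := pow_dvd_pow x hk.1
    refine ⟨y * b, ?_⟩
    rw [hy, hb]
    push_cast
    ring
  obtain ⟨t, ht⟩ := hdvd
  refine ⟨t, ?_⟩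
  rw [hpow, hsplit, ht]
  ring

/-- Exact valuation of `(1+π)^(p^j) - 1`. -/
def gexp (p e c j : ℕ) : ℕ := if c ≤ j then e * (j - c) + p ^ c else p ^ j

lemma gexp_zero (p e c : ℕ) : gexp p e c 0 = 1 := by
  unfold gexp; split_ifs with h
  · simp [Nat.le_zero.mp h]
  · simp

lemma gexp_pos (p e c j : ℕ) (hp : 0 < p) : 0 < gexp p e c j := by
  unfold gexp; split_ifs <;> positivity

lemma gexp_succ_lt (p e c j : ℕ) (hp : 2 ≤ p) (hj : j < c) :
    gexp p e c (j + 1) = p * gexp p e c j := by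
  unfold gexp
  have h1 : ¬ c ≤ j := by omega
  rw [if_neg h1]
  split_ifs with h2
  · have hc : c = j + 1 := by omega
    subst hc
    simp [pow_succ, mul_comm]
  · rw [pow_succ, mul_comm]

lemma gexp_succ_ge (p e c j : ℕ) (hj : c ≤ j) :
    gexp p e c (j + 1) = e + gexp p e c j := by
  unfold gexp
  rw [if_pos hj, if_pos (by omega)]
  have h : j + 1 - c = (j - c) + 1 := by omega
  rw [h, Nat.mul_succ]
  ring

lemma gexp_ge_pow (p e c j : ℕ) (hj : c ≤ j) : p ^ c ≤ gexp p e c j := by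
  unfold gexp; rw [if_pos hj]; omega

lemma low_strict (p e c j : ℕ) (hp : 2 ≤ p) (hj : j < c)
    (hcmin : ∀ k, k < c → ¬ e ≤ (p - 1) * p ^ k) :
    p * gexp p e c j < e + gexp p e c j := by
  have hgj : gexp p e c j = p ^ j := by unfold gexp; rw [if_neg (by omega)]
  rw [hgj]
  have h := hcmin j hj
  have hlt : (p - 1) * p ^ j < e := by omega
  have key : p * p ^ j = (p - 1) * p ^ j + p ^ j := by
    have hh : p - 1 + 1 = p := by omega
    rw [← hh, add_mul, one_mul, hh]
  omega

lemma high_strict (p e c j : ℕ) (hp : 2 ≤ p) (hj : c ≤ j)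
    (hc : e ≤ (p - 1) * p ^ c) (hne : e ≠ (p - 1) * p ^ c) :
    e + gexp p e c j < p * gexp p e c j := by
  set v := gexp p e c j with hv
  have hvc : p ^ c ≤ v := gexp_ge_pow p e c j hj
  have h1 : (p - 1) * p ^ c ≤ (p - 1) * v := Nat.mul_le_mul_left _ hvc
  have key : p * v = (p - 1) * v + v := by
    have hh : p - 1 + 1 = p := by omega
    rw [← hh, add_mul, one_mul, hh]
  omega

/-- Let `A` be the ring of integers of a finite extension `K/ℚ_p` (here: a complete
discrete valuation ring with uniformizer `π`) with ramification degree `e` (so `π^e ∥ p`),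
and suppose `e/(p−1)` is not a power of `p`. Let `c = ⌈log_p(e/(p−1))⌉`, i.e. the least
natural number with `(p−1)·p^c ≥ e`. Let `n` be positive and `I_n` the ideal generated by
all `a^n − 1` with `a ≡ 1 mod π`. Then `A/I_n ≅ A/π^i`, where
`i = e·(ν_p(n) − c) + p^c` if `c ≤ ν_p(n)`, and `i = p^{ν_p(n)}` otherwise. -/
theorem stmt_17 {A : Type} [CommRing A] [IsDomain A] (π : A) (hπ0 : π ≠ 0)
    (hπu : ¬ IsUnit π) (hmax : ∀ a : A, a ∉ Ideal.span {π} → IsUnit a)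
    [IsAdicComplete (Ideal.span {π}) A]
    (p e : ℕ) (hp : p.Prime) (he : 0 < e)
    (hram : π ^ e ∣ (p : A) ∧ ¬ π ^ (e + 1) ∣ (p : A))
    (hpow : ∀ k : ℕ, e ≠ (p - 1) * p ^ k)
    (c : ℕ) (hc : e ≤ (p - 1) * p ^ c) (hcmin : ∀ k, k < c → ¬ e ≤ (p - 1) * p ^ k)
    (n : ℕ) (hn : 0 < n) :
    Nonempty ((A ⧸ Ideal.span {y : A | ∃ a : A, a - 1 ∈ Ideal.span {π} ∧ y = a ^ n - 1}) ≃+*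
      (A ⧸ Ideal.span {π ^ (if c ≤ n.factorization p then
          e * (n.factorization p - c) + p ^ c else p ^ (n.factorization p))})) := by
  classical
  have hp2 : 2 ≤ p := hp.two_le
  -- unit criterion
  have hunit : ∀ a : A, ¬ π ∣ a → IsUnit a := fun a h =>
    hmax a (fun hmem => h (Ideal.mem_span_singleton.mp hmem))
  have hunit_add : ∀ u w : A, IsUnit u → IsUnit (u + π * w) := by
    intro u w hu
    apply hunit
    rintro ⟨z, hz⟩
    have hdu : π ∣ u := ⟨z - w, by rw [mul_sub, ← hz]; ring⟩
    exact hπu (isUnit_of_dvd_unit hdu hu)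
  -- p = π^e * w with w a unit
  obtain ⟨w, hwA⟩ := hram.1
  have hwu : IsUnit w := by
    apply hunit
    rintro ⟨z, hz⟩
    exact hram.2 ⟨z, by rw [hwA, hz, pow_succ]; ring⟩
  -- adding something more divisible keeps exact valuation
  have hVadd : ∀ (v : ℕ) (y z : A), (∃ u, IsUnit u ∧ y = u * π ^ v) → π ^ (v + 1) ∣ z →
      ∃ u, IsUnit u ∧ y + z = u * π ^ v := by
    rintro v y z ⟨u, hu, rfl⟩ ⟨s, rfl⟩
    exact ⟨u + π * s, hunit_add u s hu, by rw [pow_succ]; ring⟩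
  -- low p-step
  have hstepLow : ∀ (v : ℕ) (x : A), 1 ≤ v → p * v < e + v →
      (∃ u, IsUnit u ∧ x = u * π ^ v) →
      ∃ u, IsUnit u ∧ (1 + x) ^ p - 1 = u * π ^ (p * v) := by
    rintro v x hv hlt ⟨u, hu, rfl⟩
    obtain ⟨t, ht⟩ := binom_p (u * π ^ v) p hp
    rw [ht]
    have hz : π ^ (p * v + 1) ∣ (p : A) * (u * π ^ v) + (p : A) * ((u * π ^ v) ^ 2 * t) := by
      apply dvd_add
      · exact dvd_trans (pow_dvd_pow π (by omega : p * v + 1 ≤ e + v))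
          ⟨w * u, by rw [hwA, pow_add]; ring⟩
      · exact dvd_trans (pow_dvd_pow π (by omega : p * v + 1 ≤ e + 2 * v))
          ⟨w * (u ^ 2 * t), by rw [hwA, pow_add]; ring⟩
    have hre : (p : A) * (u * π ^ v) + (u * π ^ v) ^ p + (p : A) * ((u * π ^ v) ^ 2 * t)
        = (u * π ^ v) ^ p + ((p : A) * (u * π ^ v) + (p : A) * ((u * π ^ v) ^ 2 * t)) := by
      ring
    rw [hre]
    exact hVadd (p * v) _ _
      ⟨u ^ p, hu.pow p, by rw [mul_pow, ← pow_mul, mul_comm v p]⟩ hz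
  -- high p-step
  have hstepHigh : ∀ (v : ℕ) (x : A), 1 ≤ v → e + v < p * v →
      (∃ u, IsUnit u ∧ x = u * π ^ v) →
      ∃ u, IsUnit u ∧ (1 + x) ^ p - 1 = u * π ^ (e + v) := by
    rintro v x hv hlt ⟨u, hu, rfl⟩
    obtain ⟨t, ht⟩ := binom_p (u * π ^ v) p hp
    rw [ht]
    have hz : π ^ (e + v + 1) ∣ (u * π ^ v) ^ p + (p : A) * ((u * π ^ v) ^ 2 * t) := by
      apply dvd_add
      · exact dvd_trans (pow_dvd_pow π (by omega : e + v + 1 ≤ p * v))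
          ⟨u ^ p, by rw [mul_pow, ← pow_mul, mul_comm v p]; ring⟩
      · exact dvd_trans (pow_dvd_pow π (by omega : e + v + 1 ≤ e + 2 * v))
          ⟨w * (u ^ 2 * t), by rw [hwA, pow_add]; ring⟩
    have hre : (p : A) * (u * π ^ v) + (u * π ^ v) ^ p + (p : A) * ((u * π ^ v) ^ 2 * t)
        = (w * u) * π ^ (e + v) + ((u * π ^ v) ^ p + (p : A) * ((u * π ^ v) ^ 2 * t)) := by
      rw [hwA, pow_add]; ring
    rw [hre]
    exact hVadd (e + v) _ _ ⟨w * u, hwu.mul hu, rfl⟩ hz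
  -- naturals prime to p are units in A
  have hnunit : ∀ k : ℕ, ¬ p ∣ k → IsUnit ((k : A)) := by
    intro k hnd
    apply hunit
    intro hdvd
    have hπp : π ∣ (p : A) := dvd_trans (dvd_pow_self π (by omega : e ≠ 0)) hram.1
    have hcop : Nat.Coprime k p := Nat.coprime_comm.mp (hp.coprime_iff_not_dvd.mpr hnd)
    obtain ⟨a, -, ha⟩ := Nat.exists_mul_mod_eq_one_of_coprime hcop (by omega)
    have hdm := Nat.div_add_mod (k * a) p
    rw [ha] at hdm
    have hcast : (p : A) * ((k * a / p : ℕ) : A) + 1 = (k : A) * (a : A) := by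
      exact_mod_cast congrArg (fun z : ℕ => (z : A)) hdm
    have h1 : π ∣ (1 : A) := by
      have heq : (1 : A) = (k : A) * a - (p : A) * ((k * a / p : ℕ) : A) := by
        rw [← hcast]; ring
      rw [heq]
      exact dvd_sub (hdvd.mul_right _) (hπp.mul_right _)
    exact hπu (isUnit_of_dvd_one h1)
  -- coprime step
  have hstepCop : ∀ (k : ℕ), 0 < k → ¬ p ∣ k → ∀ (v : ℕ) (x : A), 1 ≤ v →
      (∃ u, IsUnit u ∧ x = u * π ^ v) →
      ∃ u, IsUnit u ∧ (1 + x) ^ k - 1 = u * π ^ v := by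
    rintro k hkpos hnd v x hv ⟨u, hu, rfl⟩
    obtain ⟨t, ht⟩ := binom_lin (u * π ^ v) k hkpos
    rw [ht]
    have hz : π ^ (v + 1) ∣ (u * π ^ v) ^ 2 * t :=
      dvd_trans (pow_dvd_pow π (by omega : v + 1 ≤ 2 * v))
        ⟨u ^ 2 * t, by rw [mul_pow, ← pow_mul, mul_comm v 2]; ring⟩
    have hre : (k : A) * (u * π ^ v) + (u * π ^ v) ^ 2 * t
        = ((k : A) * u) * π ^ v + (u * π ^ v) ^ 2 * t := by ring
    rw [hre]
    exact hVadd v _ _ ⟨(k : A) * u, (hnunit k hnd).mul hu, rfl⟩ hz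
  -- exact valuation by induction
  have hExact : ∀ j : ℕ, ∃ u, IsUnit u ∧ (1 + π) ^ (p ^ j) - 1 = u * π ^ (gexp p e c j) := by
    intro j
    induction j with
    | zero => exact ⟨1, isUnit_one, by simp [gexp_zero]⟩
    | succ j ih =>
      obtain ⟨u, hu, hx⟩ := ih
      have h1 : (1 + π) ^ (p ^ j) = 1 + u * π ^ (gexp p e c j) := by rw [← hx]; ring
      have hrw : (1 + π) ^ (p ^ (j + 1)) - 1 = (1 + u * π ^ (gexp p e c j)) ^ p - 1 := by
        rw [pow_succ, pow_mul, h1]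
      rcases lt_or_ge j c with hj | hj
      · rw [hrw, gexp_succ_lt p e c j hp2 hj]
        exact hstepLow _ _ (gexp_pos p e c j (by omega)) (low_strict p e c j hp2 hj hcmin)
          ⟨u, hu, rfl⟩
      · rw [hrw, gexp_succ_ge p e c j hj]
        exact hstepHigh _ _ (gexp_pos p e c j (by omega))
          (high_strict p e c j hp2 hj hc (hpow c)) ⟨u, hu, rfl⟩
  -- divisibility by induction
  have hDiv : ∀ (x : A), π ∣ x → ∀ j : ℕ, π ^ (gexp p e c j) ∣ (1 + x) ^ (p ^ j) - 1 := by
    intro x hx j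
    induction j with
    | zero => rw [gexp_zero]; simpa using hx
    | succ j ih =>
      set y := (1 + x) ^ (p ^ j) - 1 with hy
      have h0 : (1 : A) + y = (1 + x) ^ (p ^ j) := by rw [hy]; ring
      have h1 : (1 + x) ^ (p ^ (j + 1)) - 1 = (1 + y) ^ p - 1 := by
        rw [pow_succ, pow_mul, h0]
      obtain ⟨t, ht⟩ := binom_p y p hp
      rw [h1, ht]
      obtain ⟨s, hs⟩ := ih
      have hles : gexp p e c (j + 1) ≤ e + gexp p e c j
          ∧ gexp p e c (j + 1) ≤ p * gexp p e c j := by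
        rcases lt_or_ge j c with hj | hj
        · rw [gexp_succ_lt p e c j hp2 hj]
          exact ⟨le_of_lt (low_strict p e c j hp2 hj hcmin), le_refl _⟩
        · rw [gexp_succ_ge p e c j hj]
          exact ⟨le_refl _, le_of_lt (high_strict p e c j hp2 hj hc (hpow c))⟩
      apply dvd_add (dvd_add ?_ ?_) ?_
      · exact dvd_trans (pow_dvd_pow π hles.1) ⟨w * s, by rw [hwA, hs, pow_add]; ring⟩
      · exact dvd_trans (pow_dvd_pow π hles.2)
          ⟨s ^ p, by rw [hs, mul_pow, ← pow_mul, mul_comm (gexp p e c j) p]⟩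
      · exact dvd_trans (pow_dvd_pow π hles.1)
          ⟨w * (s ^ 2 * (π ^ (gexp p e c j) * t)), by rw [hwA, hs, pow_add]; ring⟩
  -- factor n
  set m := n.factorization p with hm
  set n' := n / p ^ m with hn'def
  have hfact : p ^ m * n' = n := Nat.ordProj_mul_ordCompl_eq_self n p
  have hn'nd : ¬ p ∣ n' := Nat.not_dvd_ordCompl hp (by omega)
  have hn'pos : 0 < n' := by
    rcases Nat.eq_zero_or_pos n' with h | h
    · rw [h, mul_zero] at hfact; omega
    · exact h
  -- the exact generator
  have hgen : ∃ u : A, IsUnit u ∧ (1 + π) ^ n - 1 = u * π ^ (gexp p e c m) := by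
    obtain ⟨u, hu, hx⟩ := hExact m
    have h1 : (1 + π) ^ (p ^ m) = 1 + u * π ^ (gexp p e c m) := by rw [← hx]; ring
    have h2 : (1 + π) ^ n - 1 = (1 + u * π ^ (gexp p e c m)) ^ n' - 1 := by
      rw [← hfact, pow_mul, h1]
    rw [h2]
    exact hstepCop n' hn'pos hn'nd _ _ (gexp_pos p e c m (by omega)) ⟨u, hu, rfl⟩
  -- divisibility for all a ≡ 1 mod π
  have hdivall : ∀ a : A, π ∣ a - 1 → π ^ (gexp p e c m) ∣ a ^ n - 1 := by
    intro a ha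
    have h2 := hDiv (a - 1) ha m
    have h0 : (1 : A) + (a - 1) = a := by ring
    rw [h0] at h2
    have h4 : a ^ (p ^ m) - 1 ∣ a ^ n - 1 := by
      have h5 := sub_dvd_pow_sub_pow (a ^ (p ^ m)) 1 n'
      rw [← pow_mul, one_pow, hfact] at h5
      exact h5
    exact dvd_trans h2 h4
  -- ideal equality
  have hIeq : Ideal.span {y : A | ∃ a : A, a - 1 ∈ Ideal.span {π} ∧ y = a ^ n - 1}
      = Ideal.span {π ^ (gexp p e c m)} := by
    apply le_antisymm
    · rw [Ideal.span_le]
      rintro y ⟨a, ha, rfl⟩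
      rw [SetLike.mem_coe, Ideal.mem_span_singleton]
      exact hdivall a (Ideal.mem_span_singleton.mp ha)
    · rw [Ideal.span_le, Set.singleton_subset_iff]
      obtain ⟨u, hu, hx⟩ := hgen
      obtain ⟨v, rfl⟩ := hu
      have hmem : (1 + π) ^ n - 1
          ∈ Ideal.span {y : A | ∃ a : A, a - 1 ∈ Ideal.span {π} ∧ y = a ^ n - 1} :=
        Ideal.subset_span ⟨1 + π, by simp [Ideal.mem_span_singleton], rfl⟩
      have heq : π ^ (gexp p e c m) = (↑v⁻¹ : A) * ((1 + π) ^ n - 1) := by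
        rw [hx, ← mul_assoc, ← Units.val_mul, inv_mul_cancel v, Units.val_one, one_mul]
      rw [SetLike.mem_coe, heq]
      exact Ideal.mul_mem_left _ _ hmem
  have hexp : (if c ≤ m then e * (m - c) + p ^ c else p ^ m) = gexp p e c m := rfl
  exact ⟨Ideal.quotEquivOfEq (by rw [hexp]; exact hIeq)⟩
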